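/- Let s(x) = 2^(−n/2)(−1)^(p(x)) be a quadratic phase state with nonlinear order N := n − log₂ PAR(WHT(s)), where PAR(WHT(s)) = 2^n·max_w|ŝ(w)|^2. If p is bipartite (p(x) = ∑_k q_k(x_C) r_k(x_{C⊥}) with q_k, r_k linear over a bipartition), then 2^(n−N) ≤ PAR_l(s) ≤ 2^(n−N/2). -/

import Mathlib

open scoped Classical
set_option maxHeartbeats 1000000

namespace Stmt17

noncomputable section

def chi (R : Type*) [CommRing R] (t : ZMod 2) : R := (-1)^t.val

variable {R : Type*} [CommRing R]

lemma chi_zero : chi R 0 = 1 := by simp [chi, show (0:ZMod 2).val = 0 from rfl]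

lemma chi_one : chi R 1 = -1 := by simp [chi, show (1:ZMod 2).val = 1 from rfl]

lemma chi_add (a b : ZMod 2) : chi R (a+b) = chi R a * chi R b := by
  have key : ∀ a b : ZMod 2, (a+b).val % 2 = (a.val + b.val) % 2 := by decide
  simp only [chi, ← pow_add]
  rw [neg_one_pow_eq_pow_mod_two, key, ← neg_one_pow_eq_pow_mod_two]

lemma chi_sum {γ : Type*} (s : Finset γ) (f : γ → ZMod 2) :
    chi R (∑ j ∈ s, f j) = ∏ j ∈ s, chi R (f j) := by
  classical
  induction s using Finset.induction_on with
  | empty => simp [chi_zero]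
  | insert _ _ h ih => rw [Finset.sum_insert h, Finset.prod_insert h, chi_add, ih]

lemma zmod2_cases (t : ZMod 2) : t = 0 ∨ t = 1 := by revert t; decide

lemma chi_real_eq (t : ZMod 2) : chi ℝ t = (-1:ℝ)^t.val := rfl

lemma chi_complex_ofReal (t : ZMod 2) : ((chi ℝ t : ℝ) : ℂ) = chi ℂ t := by
  simp [chi]

lemma abs_chi_real (t : ZMod 2) : |chi ℝ t| = 1 := by
  rcases zmod2_cases t with h | h <;> simp [h, chi_zero, chi_one]

lemma abs_chi_complex (t : ZMod 2) : ‖chi ℂ t‖ = 1 := by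
  rcases zmod2_cases t with h | h <;> simp [h, chi_zero, chi_one]

lemma conj_chi (t : ZMod 2) : (starRingEnd ℂ) (chi ℂ t) = chi ℂ t := by
  rcases zmod2_cases t with h | h <;> simp [h, chi_zero, chi_one]

lemma sum_zmod2 {M : Type*} [AddCommMonoid M] (f : ZMod 2 → M) :
    ∑ t : ZMod 2, f t = f 0 + f 1 := Fin.sum_univ_two f

lemma zmod2_add_self (t : ZMod 2) : t + t = 0 := by fin_cases t <;> rfl

lemma fun_add_self {γ : Type*} (f : γ → ZMod 2) : f + f = 0 := by
  funext j; exact zmod2_add_self (f j)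

lemma fun_add_eq_zero_iff {γ : Type*} (f g : γ → ZMod 2) :
    (fun j => f j + g j) = 0 ↔ f = g := by
  constructor
  · intro h
    funext j
    have h2 := congrFun h j
    have h3 : ∀ s t : ZMod 2, s + t = 0 → s = t := by decide
    exact h3 _ _ h2
  · rintro rfl
    funext j
    exact zmod2_add_self (f j)



lemma orth {γ : Type*} [Fintype γ] [DecidableEq γ] (R : Type*) [CommRing R] (c : γ → ZMod 2) :
    ∑ b : γ → ZMod 2, chi R (∑ j, c j * b j) =
      if c = 0 then (2:R)^(Fintype.card γ) else 0 := by
  have h1 : ∀ b : γ → ZMod 2, chi R (∑ j, c j * b j) = ∏ j, chi R (c j * b j) :=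
    fun b => chi_sum _ _
  have h0 := Finset.prod_univ_sum (fun _ : γ => (Finset.univ : Finset (ZMod 2)))
    (fun j t => chi R (c j * t))
  rw [Fintype.piFinset_univ] at h0
  have h2 : ∀ j, ∑ t : ZMod 2, chi R (c j * t) = if c j = 0 then 2 else 0 := by
    intro j
    rw [sum_zmod2 (fun t => chi R (c j * t))]
    rcases zmod2_cases (c j) with h | h <;>
      simp [h, chi_zero, chi_one]
    norm_num
  calc ∑ b : γ → ZMod 2, chi R (∑ j, c j * b j)
      = ∑ b : γ → ZMod 2, ∏ j, chi R (c j * b j) := by simp_rw [h1]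
    _ = ∏ j, ∑ t : ZMod 2, chi R (c j * t) := h0.symm
    _ = if c = 0 then (2:R)^(Fintype.card γ) else 0 := by
        by_cases hc : c = 0
        · simp [hc, h2, chi_zero]
        · rw [if_neg hc]
          obtain ⟨j0, hj0⟩ : ∃ j, c j ≠ 0 := by
            by_contra h
            push_neg at h
            exact hc (funext h)
          exact Finset.prod_eq_zero (Finset.mem_univ j0) (by rw [h2 j0, if_neg hj0])


variable {n : ℕ} (S : Finset (Fin n))

def Esplit : (Fin n → ZMod 2) ≃ ((↥S → ZMod 2) × (↥(Sᶜ) → ZMod 2)) where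
  toFun x := (fun i => x i.1, fun j => x j.1)
  invFun ab i := if h : i ∈ S then ab.1 ⟨i, h⟩ else ab.2 ⟨i, Finset.mem_compl.2 h⟩
  left_inv x := by
    funext i
    by_cases h : i ∈ S <;> simp [h]
  right_inv ab := by
    obtain ⟨a, b⟩ := ab
    ext i
    · simp [i.2]
    · have hi : (i : Fin n) ∉ S := Finset.mem_compl.1 i.2
      simp [hi]

variable (M : Fin n → Fin n → ZMod 2)

def Tmap : (↥S → ZMod 2) → (↥(Sᶜ) → ZMod 2) := fun a j => ∑ i : ↥S, M i.1 j.1 * a i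

lemma Tmap_add (a a' : ↥S → ZMod 2) : Tmap S M (a + a') = Tmap S M a + Tmap S M a' := by
  funext j
  simp [Tmap, mul_add, Finset.sum_add_distrib]

def Kcard : ℕ := (Finset.univ.filter fun a : ↥S → ZMod 2 => Tmap S M a = 0).card
def Icard : ℕ := (Finset.univ.image (Tmap S M)).card

lemma fiber_card_le (v : ↥(Sᶜ) → ZMod 2) :
    (Finset.univ.filter fun a => Tmap S M a = v).card ≤ Kcard S M := by
  rcases Finset.eq_empty_or_nonempty (Finset.univ.filter fun a => Tmap S M a = v) with h | h
  · simp [h, Nat.zero_le]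
  · obtain ⟨a0, ha0⟩ := h
    rw [Finset.mem_filter] at ha0
    apply Finset.card_le_card_of_injOn (fun a => a + a0)
    · intro a ha
      rw [Finset.mem_coe, Finset.mem_filter] at ha ⊢
      refine ⟨Finset.mem_univ _, ?_⟩
      rw [Tmap_add, ha.2, ha0.2, fun_add_self]
    · intro a _ a' _ h
      have := congrArg (· + a0) h
      simpa [add_assoc, fun_add_self] using this

lemma fiber_card_eq {v : ↥(Sᶜ) → ZMod 2} (hv : v ∈ Finset.univ.image (Tmap S M)) :
    (Finset.univ.filter fun a => Tmap S M a = v).card = Kcard S M := by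
  refine le_antisymm (fiber_card_le S M v) ?_
  obtain ⟨a0, -, ha0⟩ := Finset.mem_image.1 hv
  apply Finset.card_le_card_of_injOn (fun a => a + a0)
  · intro a ha
    rw [Finset.mem_coe, Finset.mem_filter] at ha ⊢
    refine ⟨Finset.mem_univ _, ?_⟩
    rw [Tmap_add, ha.2, ha0, zero_add]
  · intro a _ a' _ h
    have := congrArg (· + a0) h
    simpa [add_assoc, fun_add_self] using this

lemma count_eq : 2 ^ S.card = Icard S M * Kcard S M := by
  have h1 : (Finset.univ : Finset (↥S → ZMod 2)).card = 2 ^ S.card := by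
    simp [Finset.card_univ]
  rw [← h1, Finset.card_eq_sum_card_image (Tmap S M)]
  rw [Finset.sum_congr rfl (fun v hv => fiber_card_eq S M hv)]
  simp [Icard, mul_comm]

lemma Kcard_pos : 0 < Kcard S M := by
  apply Finset.card_pos.2
  refine ⟨0, ?_⟩
  rw [Finset.mem_filter]
  refine ⟨Finset.mem_univ _, ?_⟩
  funext j
  simp [Tmap]

lemma sum_prod_sq {γ : Type*} [Fintype γ] [DecidableEq γ] (c : γ → ZMod 2 → ℝ)
    (hc : ∀ j, (c j 0)^2 + (c j 1)^2 = 1) :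
    ∑ b : γ → ZMod 2, ∏ j, (c j (b j))^2 = 1 := by
  have h0 := Finset.prod_univ_sum (fun _ : γ => (Finset.univ : Finset (ZMod 2)))
    (fun j t => (c j t)^2)
  rw [Fintype.piFinset_univ] at h0
  rw [← h0]
  apply Finset.prod_eq_one
  intro j _
  rw [sum_zmod2 (fun t => (c j t)^2)]
  exact hc j

lemma mul_conj_eq (z : ℂ) : z * (starRingEnd ℂ) z = ((‖z‖ : ℝ) : ℂ)^2 := by
  rw [Complex.mul_conj]
  norm_cast
  rw [Complex.sq_norm]

lemma parseval {γ : Type*} [Fintype γ] [DecidableEq γ] (G : (γ → ZMod 2) → ℂ) :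
    ∑ v : γ → ZMod 2,
        ‖∑ b : γ → ZMod 2, chi ℂ (∑ j, v j * b j) * G b‖ ^ 2
      = 2^(Fintype.card γ) * ∑ b : γ → ZMod 2, ‖G b‖ ^ 2 := by
  have key : ∑ v : γ → ZMod 2,
      (∑ b : γ → ZMod 2, chi ℂ (∑ j, v j * b j) * G b) *
        (starRingEnd ℂ) (∑ b : γ → ZMod 2, chi ℂ (∑ j, v j * b j) * G b)
      = (2:ℂ)^(Fintype.card γ) * ∑ b : γ → ZMod 2, G b * (starRingEnd ℂ) (G b) := by
    have e1 : ∀ v : γ → ZMod 2,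
        (∑ b : γ → ZMod 2, chi ℂ (∑ j, v j * b j) * G b) *
          (starRingEnd ℂ) (∑ b : γ → ZMod 2, chi ℂ (∑ j, v j * b j) * G b)
        = ∑ b : γ → ZMod 2, ∑ b' : γ → ZMod 2,
            (G b * (starRingEnd ℂ) (G b')) * chi ℂ (∑ j, (b j + b' j) * v j) := by
      intro v
      rw [map_sum, Finset.sum_mul_sum]
      refine Finset.sum_congr rfl fun b _ => Finset.sum_congr rfl fun b' _ => ?_
      rw [map_mul, conj_chi]
      have harg : (∑ j, (v j * b j + v j * b' j)) = ∑ j, (b j + b' j) * v j :=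
        Finset.sum_congr rfl fun j _ => by ring
      have hmul : chi ℂ (∑ j, v j * b j) * chi ℂ (∑ j, v j * b' j)
          = chi ℂ (∑ j, (b j + b' j) * v j) := by
        rw [← chi_add, ← Finset.sum_add_distrib, harg]
      linear_combination (G b * (starRingEnd ℂ) (G b')) * hmul
    simp_rw [e1]
    rw [Finset.sum_comm]
    have e2 : ∀ b : γ → ZMod 2, ∑ v : γ → ZMod 2, ∑ b' : γ → ZMod 2,
        (G b * (starRingEnd ℂ) (G b')) * chi ℂ (∑ j, (b j + b' j) * v j)
        = (2:ℂ)^(Fintype.card γ) * (G b * (starRingEnd ℂ) (G b)) := by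
      intro b
      rw [Finset.sum_comm]
      have e3 : ∀ b' : γ → ZMod 2,
          ∑ v : γ → ZMod 2, (G b * (starRingEnd ℂ) (G b')) * chi ℂ (∑ j, (b j + b' j) * v j)
          = (G b * (starRingEnd ℂ) (G b')) * (if b' = b then (2:ℂ)^(Fintype.card γ) else 0) := by
        intro b'
        rw [← Finset.mul_sum]
        congr 1
        refine (orth ℂ (fun j => b j + b' j)).trans ?_
        congr 1
        exact propext ((fun_add_eq_zero_iff b b').trans eq_comm)
      simp_rw [e3]
      simp only [mul_ite, mul_zero]
      rw [Finset.sum_ite_eq' Finset.univ b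
        (fun b' => (G b * (starRingEnd ℂ) (G b')) * (2:ℂ)^(Fintype.card γ))]
      simp only [Finset.mem_univ, if_true]
      ring
    simp_rw [e2]
    rw [← Finset.mul_sum]
  have cast1 : ((∑ v : γ → ZMod 2,
      ‖∑ b : γ → ZMod 2, chi ℂ (∑ j, v j * b j) * G b‖ ^ 2 : ℝ) : ℂ)
      = ((2^(Fintype.card γ) * ∑ b : γ → ZMod 2, ‖G b‖ ^ 2 : ℝ) : ℂ) := by
    push_cast
    simp_rw [← mul_conj_eq]
    exact key
  exact_mod_cast cast1

lemma Esymm_mem (a : ↥S → ZMod 2) (b : ↥(Sᶜ) → ZMod 2) (i : ↥S) :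
    (Esplit S).symm (a, b) i.1 = a i := by
  have h : (i:Fin n) ∈ S := i.2
  simp [Esplit, h]

lemma Esymm_not_mem (a : ↥S → ZMod 2) (b : ↥(Sᶜ) → ZMod 2) (j : ↥(Sᶜ)) :
    (Esplit S).symm (a, b) j.1 = b j := by
  have h : (j:Fin n) ∉ S := Finset.mem_compl.1 j.2
  simp [Esplit, h]

def pB (x : Fin n → ZMod 2) : ZMod 2 := ∑ i ∈ S, ∑ j ∈ Sᶜ, M i j * x i * x j

lemma pB_split (a : ↥S → ZMod 2) (b : ↥(Sᶜ) → ZMod 2) :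
    pB S M ((Esplit S).symm (a, b)) = ∑ j : ↥(Sᶜ), Tmap S M a j * b j := by
  unfold pB
  rw [← Finset.sum_coe_sort S]
  have h1 : ∀ i : ↥S, ∑ j ∈ Sᶜ, M i.1 j * (Esplit S).symm (a,b) i.1 * (Esplit S).symm (a,b) j
      = ∑ j : ↥(Sᶜ), M i.1 j.1 * a i * b j := by
    intro i
    rw [← Finset.sum_coe_sort (Sᶜ)]
    refine Finset.sum_congr rfl fun j _ => ?_
    rw [Esymm_mem, Esymm_not_mem]
  rw [Finset.sum_congr rfl (fun i _ => h1 i), Finset.sum_comm]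
  refine Finset.sum_congr rfl fun j _ => ?_
  rw [Tmap, Finset.sum_mul]

lemma dot_split (a : ↥S → ZMod 2) (b : ↥(Sᶜ) → ZMod 2) (w : Fin n → ZMod 2) :
    ∑ i, (Esplit S).symm (a, b) i * w i
      = (∑ i : ↥S, a i * w i.1) + ∑ j : ↥(Sᶜ), b j * w j.1 := by
  rw [← Finset.sum_add_sum_compl S (fun i => (Esplit S).symm (a,b) i * w i),
    ← Finset.sum_coe_sort S, ← Finset.sum_coe_sort (Sᶜ)]
  congr 1
  · exact Finset.sum_congr rfl fun i _ => by rw [Esymm_mem]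
  · exact Finset.sum_congr rfl fun j _ => by rw [Esymm_not_mem]

lemma sum_chi_eval (w : Fin n → ZMod 2) :
    ∑ x : Fin n → ZMod 2, chi ℝ (∑ i, x i * w i) * chi ℝ (pB S M x)
      = 2^(Sᶜ.card) * ∑ a ∈ Finset.univ.filter
          (fun a : ↥S → ZMod 2 => Tmap S M a = fun j => w j.1),
          chi ℝ (∑ i : ↥S, a i * w i.1) := by
  classical
  rw [← Equiv.sum_comp (Esplit S).symm
    (fun x => chi ℝ (∑ i, x i * w i) * chi ℝ (pB S M x)), Fintype.sum_prod_type]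
  have step : ∀ a : ↥S → ZMod 2, ∀ b : ↥(Sᶜ) → ZMod 2,
      chi ℝ (∑ i, (Esplit S).symm (a,b) i * w i) * chi ℝ (pB S M ((Esplit S).symm (a,b)))
      = chi ℝ (∑ i : ↥S, a i * w i.1) *
          chi ℝ (∑ j : ↥(Sᶜ), (Tmap S M a j + w j.1) * b j) := by
    intro a b
    rw [dot_split, pB_split, chi_add, mul_assoc, ← chi_add]
    congr 2
    rw [← Finset.sum_add_distrib]
    refine Finset.sum_congr rfl fun j _ => ?_
    ring
  simp_rw [step, ← Finset.mul_sum]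
  have step2 : ∀ a : ↥S → ZMod 2,
      ∑ b : ↥(Sᶜ) → ZMod 2, chi ℝ (∑ j : ↥(Sᶜ), (Tmap S M a j + w j.1) * b j)
      = if Tmap S M a = (fun j => w j.1) then (2:ℝ)^(Sᶜ.card) else 0 := by
    intro a
    refine (orth ℝ (fun j : ↥(Sᶜ) => Tmap S M a j + w j.1)).trans ?_
    rw [Fintype.card_coe]
    congr 1
    exact propext (fun_add_eq_zero_iff _ _)
  simp_rw [step2]
  rw [Finset.mul_sum, Finset.sum_filter]
  refine Finset.sum_congr rfl fun a _ => ?_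
  by_cases h : Tmap S M a = (fun j => w j.1) <;> simp [h, mul_comm]

lemma inner_split (l : Fin n → ZMod 2 → ℂ) :
    ∑ x : Fin n → ZMod 2, chi ℂ (pB S M x) * (starRingEnd ℂ) (∏ i, l i (x i))
      = ∑ a : ↥S → ZMod 2,
          (∏ i : ↥S, (starRingEnd ℂ) (l i.1 (a i))) *
          ∑ b : ↥(Sᶜ) → ZMod 2,
            chi ℂ (∑ j : ↥(Sᶜ), Tmap S M a j * b j) *
              ∏ j : ↥(Sᶜ), (starRingEnd ℂ) (l j.1 (b j)) := by
  rw [← Equiv.sum_comp (Esplit S).symm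
    (fun x => chi ℂ (pB S M x) * (starRingEnd ℂ) (∏ i, l i (x i))), Fintype.sum_prod_type]
  refine Finset.sum_congr rfl fun a _ => ?_
  rw [Finset.mul_sum]
  refine Finset.sum_congr rfl fun b _ => ?_
  rw [pB_split]
  have hprod : ∏ i : Fin n, l i ((Esplit S).symm (a,b) i)
      = (∏ i : ↥S, l i.1 (a i)) * ∏ j : ↥(Sᶜ), l j.1 (b j) := by
    rw [← Finset.prod_mul_prod_compl S (fun i => l i ((Esplit S).symm (a,b) i)),
      ← Finset.prod_coe_sort S, ← Finset.prod_coe_sort (Sᶜ)]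
    congr 1
    · exact Finset.prod_congr rfl fun i _ => by rw [Esymm_mem]
    · exact Finset.prod_congr rfl fun j _ => by rw [Esymm_not_mem]
  rw [hprod, map_mul, map_prod, map_prod]
  ring

lemma per_l_bound (l : Fin n → ZMod 2 → ℂ)
    (hl : ∀ i, ‖l i 0‖^2 + ‖l i 1‖^2 = 1) :
    ‖∑ x : Fin n → ZMod 2,
        chi ℂ (pB S M x) * (starRingEnd ℂ) (∏ i, l i (x i))‖ ^ 2
      ≤ (Kcard S M) * 2^(Sᶜ.card) := by
  rw [inner_split]
  set F : (↥S → ZMod 2) → ℂ := fun a => ∏ i : ↥S, (starRingEnd ℂ) (l i.1 (a i)) with hF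
  set G : (↥(Sᶜ) → ZMod 2) → ℂ := fun b => ∏ j : ↥(Sᶜ), (starRingEnd ℂ) (l j.1 (b j)) with hG
  set H : (↥(Sᶜ) → ZMod 2) → ℂ :=
    fun v => ∑ b : ↥(Sᶜ) → ZMod 2, chi ℂ (∑ j : ↥(Sᶜ), v j * b j) * G b with hH
  have hstep : ‖∑ a : ↥S → ZMod 2, F a * H (Tmap S M a)‖
      ≤ ∑ a : ↥S → ZMod 2, ‖F a‖ * ‖H (Tmap S M a)‖ := by
    refine (norm_sum_le _ _).trans_eq ?_
    exact Finset.sum_congr rfl fun a _ => by rw [norm_mul]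
  have habs2 : ∀ c : ZMod 2 → ℂ, ∀ t, ‖(starRingEnd ℂ) (c t)‖ = ‖c t‖ :=
    fun c t => Complex.norm_conj _
  have hFsum : ∑ a : ↥S → ZMod 2, ‖F a‖ ^ 2 = 1 := by
    have := sum_prod_sq (fun (i : ↥S) (t : ZMod 2) => ‖l i.1 t‖)
      (fun i => hl i.1)
    rw [← this]
    refine Finset.sum_congr rfl fun a _ => ?_
    rw [hF, norm_prod, ← Finset.prod_pow]
    exact Finset.prod_congr rfl fun i _ => by rw [Complex.norm_conj]
  have hGsum : ∑ b : ↥(Sᶜ) → ZMod 2, ‖G b‖ ^ 2 = 1 := by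
    have := sum_prod_sq (fun (j : ↥(Sᶜ)) (t : ZMod 2) => ‖l j.1 t‖)
      (fun j => hl j.1)
    rw [← this]
    refine Finset.sum_congr rfl fun b _ => ?_
    rw [hG, norm_prod, ← Finset.prod_pow]
    exact Finset.prod_congr rfl fun j _ => by rw [Complex.norm_conj]
  have hHsum : ∑ a : ↥S → ZMod 2, ‖H (Tmap S M a)‖ ^ 2
      ≤ (Kcard S M) * 2^(Sᶜ.card) := by
    rw [Finset.sum_comp (fun v => ‖H v‖ ^ 2) (Tmap S M)]
    have h1 : ∀ v ∈ Finset.univ.image (Tmap S M),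
        (Finset.univ.filter (fun a => Tmap S M a = v)).card • ‖H v‖ ^ 2
          ≤ (Kcard S M) * ‖H v‖ ^ 2 := by
      intro v _
      rw [nsmul_eq_mul]
      exact mul_le_mul_of_nonneg_right (by exact_mod_cast fiber_card_le S M v)
        (sq_nonneg _)
    refine (Finset.sum_le_sum h1).trans ?_
    rw [← Finset.mul_sum]
    have h2 : ∑ v ∈ Finset.univ.image (Tmap S M), ‖H v‖ ^ 2
        ≤ ∑ v : ↥(Sᶜ) → ZMod 2, ‖H v‖ ^ 2 :=
      Finset.sum_le_sum_of_subset_of_nonneg (Finset.subset_univ _)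
        (fun v _ _ => sq_nonneg _)
    have h3 : ∑ v : ↥(Sᶜ) → ZMod 2, ‖H v‖ ^ 2 = 2^(Sᶜ.card) := by
      rw [hH]
      have := parseval G
      rw [Fintype.card_coe] at this
      rw [this, hGsum, mul_one]
    calc (Kcard S M : ℝ) * ∑ v ∈ Finset.univ.image (Tmap S M), ‖H v‖ ^ 2
        ≤ (Kcard S M : ℝ) * ∑ v : ↥(Sᶜ) → ZMod 2, ‖H v‖ ^ 2 :=
          mul_le_mul_of_nonneg_left h2 (Nat.cast_nonneg _)
      _ = (Kcard S M) * 2^(Sᶜ.card) := by rw [h3]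
  calc ‖∑ a : ↥S → ZMod 2, F a * H (Tmap S M a)‖ ^ 2
      ≤ (∑ a : ↥S → ZMod 2, ‖F a‖ * ‖H (Tmap S M a)‖) ^ 2 := by
        apply pow_le_pow_left₀ (norm_nonneg _) hstep
    _ ≤ (∑ a : ↥S → ZMod 2, ‖F a‖ ^ 2) *
          (∑ a : ↥S → ZMod 2, ‖H (Tmap S M a)‖ ^ 2) :=
        Finset.sum_mul_sq_le_sq_mul_sq _ _ _
    _ ≤ 1 * ((Kcard S M) * 2^(Sᶜ.card)) := by
        rw [hFsum]
        exact mul_le_mul_of_nonneg_left hHsum (by norm_num)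
    _ = (Kcard S M) * 2^(Sᶜ.card) := one_mul _

lemma Icard_pos : 0 < Icard S M :=
  Finset.card_pos.2 (Finset.Nonempty.image Finset.univ_nonempty _)

lemma sqrt_two_pow (n : ℕ) : Real.sqrt (2^n) = (Real.sqrt 2)^n := by
  have h : ((Real.sqrt 2)^n)^2 = 2^n := by
    rw [← pow_mul, mul_comm, pow_mul, Real.sq_sqrt (by norm_num : (0:ℝ) ≤ 2)]
  rw [← h, Real.sqrt_sq (pow_nonneg (Real.sqrt_nonneg 2) n)]

end
end Stmt17

open Stmt17

/-- For a bipartite quadratic phase state `s = 2^{−n/2}(−1)^{p(x)}` with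
nonlinear order `N = n − log₂ PAR(WHT(s))`, we have
`2^(n−N) ≤ PAR_l(s) ≤ 2^(n−N/2)`. -/
theorem stmt_17 (n N : ℕ) (hN : N ≤ n)
    (p : (Fin n → ZMod 2) → ZMod 2)
    (hbip : ∃ (S : Finset (Fin n)) (M : Fin n → Fin n → ZMod 2),
      ∀ x, p x = ∑ i ∈ S, ∑ j ∈ Sᶜ, M i j * x i * x j)
    (s : (Fin n → ZMod 2) → ℝ)
    (hs : ∀ x, s x = (Real.sqrt (2 ^ n))⁻¹ * (-1 : ℝ) ^ (p x).val)
    (hNdef : (2 : ℝ) ^ n *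
        (⨆ w : Fin n → ZMod 2,
          ((Real.sqrt (2 ^ n))⁻¹ *
            ∑ x : Fin n → ZMod 2, (-1 : ℝ) ^ ((∑ i, x i * w i).val) * s x) ^ 2)
      = 2 ^ (n - N))
    (PARl : ℝ)
    (hPAR : PARl = 2 ^ n * sSup { r : ℝ |
        ∃ l : Fin n → (ZMod 2 → ℂ),
          (∀ i, ‖l i 0‖ ^ 2 + ‖l i 1‖ ^ 2 = 1) ∧
          r = ‖∑ x : Fin n → ZMod 2,
                (s x : ℂ) * (starRingEnd ℂ) (∏ i, l i (x i))‖ ^ 2 }) :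
    (2 : ℝ) ^ (n - N) ≤ PARl ∧ PARl ≤ (2 : ℝ) ^ ((n : ℝ) - (N : ℝ) / 2) := by
  obtain ⟨S, M, hp⟩ := hbip
  have hpB : ∀ x, p x = pB S M x := hp
  set K0 := Kcard S M with hK0def
  set I0 := Icard S M with hI0def
  have hK0pos : 0 < K0 := Kcard_pos S M
  have hI0pos : 0 < I0 := Icard_pos S M
  have hkm : S.card + Sᶜ.card = n := by
    simpa using Finset.card_add_card_compl S
  have h2n' : (2:ℝ)^n = 2^S.card * 2^Sᶜ.card := by rw [← pow_add, hkm]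
  have hsq : (Real.sqrt ((2:ℝ)^n))⁻¹ * (Real.sqrt ((2:ℝ)^n))⁻¹ = ((2:ℝ)^n)⁻¹ := by
    rw [← mul_inv, Real.mul_self_sqrt (by positivity)]
  -- the coefficient function
  set Sig : (Fin n → ZMod 2) → ℝ := fun w =>
    ∑ a ∈ Finset.univ.filter (fun a : ↥S → ZMod 2 => Tmap S M a = fun j => w j.1),
      chi ℝ (∑ i : ↥S, a i * w i.1) with hSig
  have hamp : ∀ w : Fin n → ZMod 2,
      ((Real.sqrt (2 ^ n))⁻¹ *
        ∑ x : Fin n → ZMod 2, (-1 : ℝ) ^ ((∑ i, x i * w i).val) * s x)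
      = ((2:ℝ)^n)⁻¹ * (2^Sᶜ.card * Sig w) := by
    intro w
    have h1 : ∀ x : Fin n → ZMod 2, (-1:ℝ)^((∑ i, x i * w i).val) * s x
        = (Real.sqrt (2^n))⁻¹ * (chi ℝ (∑ i, x i * w i) * chi ℝ (pB S M x)) := by
      intro x
      rw [hs x, hpB x, chi_real_eq, chi_real_eq]
      ring
    rw [Finset.sum_congr rfl (fun x _ => h1 x), ← Finset.mul_sum, ← mul_assoc, hsq,
      sum_chi_eval S M w]
  -- bound on Sig
  have hSigbound : ∀ w, |Sig w| ≤ (K0:ℝ) := by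
    intro w
    refine (Finset.abs_sum_le_sum_abs _ _).trans ?_
    rw [Finset.sum_congr rfl (fun a _ => abs_chi_real (∑ i : ↥S, a i * w i.1)),
      Finset.sum_const, nsmul_eq_mul, mul_one]
    exact_mod_cast fiber_card_le S M _
  have hSig0 : Sig 0 = (K0:ℝ) := by
    rw [hSig]
    have hcond : (fun j : ↥(Sᶜ) => (0 : Fin n → ZMod 2) j.1) = (0 : ↥(Sᶜ) → ZMod 2) := rfl
    simp only [hcond, Pi.zero_apply, mul_zero, Finset.sum_const_zero, chi_zero]
    rw [Finset.sum_const, nsmul_eq_mul, mul_one, hK0def, Kcard]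
    norm_cast
  -- compute the sup
  have hsup : (⨆ w : Fin n → ZMod 2,
      ((Real.sqrt (2 ^ n))⁻¹ *
        ∑ x : Fin n → ZMod 2, (-1 : ℝ) ^ ((∑ i, x i * w i).val) * s x) ^ 2)
      = (((2:ℝ)^n)⁻¹ * (2^Sᶜ.card * K0))^2 := by
    have hfun : ∀ w : Fin n → ZMod 2,
        ((Real.sqrt (2 ^ n))⁻¹ *
          ∑ x : Fin n → ZMod 2, (-1 : ℝ) ^ ((∑ i, x i * w i).val) * s x) ^ 2
        = (((2:ℝ)^n)⁻¹ * (2^Sᶜ.card * Sig w))^2 := fun w => by rw [hamp w]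
    simp_rw [hfun]
    have hbd : BddAbove (Set.range fun w : Fin n → ZMod 2 =>
        (((2:ℝ)^n)⁻¹ * (2^Sᶜ.card * Sig w))^2) := Finite.bddAbove_range _
    apply le_antisymm
    · refine ciSup_le fun w => ?_
      have h2 : (Sig w)^2 ≤ (K0:ℝ)^2 := by
        have h3 := hSigbound w
        have h4 := abs_nonneg (Sig w)
        nlinarith [sq_abs (Sig w)]
      calc (((2:ℝ)^n)⁻¹ * (2^Sᶜ.card * Sig w))^2
          = (((2:ℝ)^n)⁻¹)^2 * ((2:ℝ)^Sᶜ.card)^2 * (Sig w)^2 := by ring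
        _ ≤ (((2:ℝ)^n)⁻¹)^2 * ((2:ℝ)^Sᶜ.card)^2 * (K0:ℝ)^2 :=
            mul_le_mul_of_nonneg_left h2 (by positivity)
        _ = (((2:ℝ)^n)⁻¹ * (2^Sᶜ.card * K0))^2 := by ring
    · have h5 := le_ciSup hbd (0 : Fin n → ZMod 2)
      rwa [hSig0] at h5
  have hNdef' : (2:ℝ)^n * (((2:ℝ)^n)⁻¹ * (2^Sᶜ.card * K0))^2 = 2^(n-N) := by
    rw [← hsup]; exact hNdef
  -- counting
  have hcount : (I0:ℝ) * (K0:ℝ) = 2^S.card := by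
    have := count_eq S M
    exact_mod_cast this.symm
  have hK0ne : (K0:ℝ) ≠ 0 := by positivity
  have hIsq : (I0:ℝ)^2 = 2^N := by
    have e2 : (2:ℝ)^(n-N) * 2^N = 2^n := by rw [← pow_add, Nat.sub_add_cancel hN]
    have key1 : ((2:ℝ)^Sᶜ.card)^2 * (K0:ℝ)^2 = 2^(n-N) * 2^n := by
      have h6 : (2:ℝ)^n * (((2:ℝ)^n)⁻¹ * (2^Sᶜ.card * K0))^2 * ((2:ℝ)^n)
          = ((2:ℝ)^Sᶜ.card)^2 * (K0:ℝ)^2 := by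
        field_simp
      rw [← h6, hNdef']
    have key2 : (I0:ℝ)^2 * (((2:ℝ)^Sᶜ.card)^2 * (K0:ℝ)^2) = ((2:ℝ)^n)^2 := by
      calc (I0:ℝ)^2 * (((2:ℝ)^Sᶜ.card)^2 * (K0:ℝ)^2)
          = ((I0:ℝ) * (K0:ℝ) * 2^Sᶜ.card)^2 := by ring
        _ = ((2:ℝ)^S.card * 2^Sᶜ.card)^2 := by rw [hcount]
        _ = ((2:ℝ)^n)^2 := by rw [← h2n']
    rw [key1] at key2
    have h7 : (0:ℝ) < 2^(n-N) * 2^n := by positivity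
    have h8 : (I0:ℝ)^2 * (2^(n-N) * 2^n) = 2^N * (2^(n-N) * 2^n) := by
      rw [key2]
      calc ((2:ℝ)^n)^2 = (2^(n-N)*2^N) * 2^n := by rw [e2]; ring
        _ = 2^N * (2^(n-N) * 2^n) := by ring
    exact mul_right_cancel₀ (ne_of_gt h7) h8
  have hI : (I0:ℝ) = (2:ℝ) ^ ((N:ℝ)/2) := by
    have hr : ((2:ℝ)^((N:ℝ)/2))^2 = 2^N := by
      rw [← Real.rpow_natCast ((2:ℝ)^((N:ℝ)/2)) 2,
        ← Real.rpow_mul (by norm_num : (0:ℝ) ≤ 2)]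
      norm_num
    rw [← Real.sqrt_sq (by positivity : (0:ℝ) ≤ (I0:ℝ)), hIsq, ← hr,
      Real.sqrt_sq (Real.rpow_nonneg (by norm_num) _)]
  -- upper bound per element
  have hub : ∀ r ∈ { r : ℝ |
      ∃ l : Fin n → (ZMod 2 → ℂ),
        (∀ i, ‖l i 0‖ ^ 2 + ‖l i 1‖ ^ 2 = 1) ∧
        r = ‖∑ x : Fin n → ZMod 2,
              (s x : ℂ) * (starRingEnd ℂ) (∏ i, l i (x i))‖ ^ 2 },
      r ≤ ((2:ℝ)^n)⁻¹ * ((K0:ℝ) * 2^Sᶜ.card) := by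
    rintro r ⟨l, hl, rfl⟩
    have hrw : ∑ x : Fin n → ZMod 2, (s x : ℂ) * (starRingEnd ℂ) (∏ i, l i (x i))
        = (((Real.sqrt (2^n))⁻¹ : ℝ) : ℂ) *
          ∑ x : Fin n → ZMod 2, chi ℂ (pB S M x) * (starRingEnd ℂ) (∏ i, l i (x i)) := by
      rw [Finset.mul_sum]
      refine Finset.sum_congr rfl fun x _ => ?_
      rw [hs x, hpB x, ← chi_real_eq, ← chi_complex_ofReal]
      push_cast
      ring
    rw [hrw, norm_mul, Complex.norm_real, Real.norm_eq_abs, abs_of_nonneg (by positivity), mul_pow]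
    have h9 : ((Real.sqrt ((2:ℝ)^n))⁻¹)^2 = ((2:ℝ)^n)⁻¹ := by
      rw [sq]; exact hsq
    rw [h9]
    exact mul_le_mul_of_nonneg_left (per_l_bound S M l hl) (by positivity)
  have hbdd : BddAbove { r : ℝ |
      ∃ l : Fin n → (ZMod 2 → ℂ),
        (∀ i, ‖l i 0‖ ^ 2 + ‖l i 1‖ ^ 2 = 1) ∧
        r = ‖∑ x : Fin n → ZMod 2,
              (s x : ℂ) * (starRingEnd ℂ) (∏ i, l i (x i))‖ ^ 2 } :=
    ⟨((2:ℝ)^n)⁻¹ * ((K0:ℝ) * 2^Sᶜ.card), fun r hr => hub r hr⟩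
  -- membership of the Walsh vectors
  have hmem : ∀ w : Fin n → ZMod 2,
      (((Real.sqrt (2 ^ n))⁻¹ *
        ∑ x : Fin n → ZMod 2, (-1 : ℝ) ^ ((∑ i, x i * w i).val) * s x) ^ 2) ∈
      { r : ℝ |
        ∃ l : Fin n → (ZMod 2 → ℂ),
          (∀ i, ‖l i 0‖ ^ 2 + ‖l i 1‖ ^ 2 = 1) ∧
          r = ‖∑ x : Fin n → ZMod 2,
                (s x : ℂ) * (starRingEnd ℂ) (∏ i, l i (x i))‖ ^ 2 } := by
    intro w
    refine ⟨fun i t => (((Real.sqrt 2)⁻¹ : ℝ) : ℂ) * chi ℂ (t * w i), fun i => ?_, ?_⟩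
    · simp only [norm_mul, Complex.norm_real, Real.norm_eq_abs, abs_chi_complex, mul_one]
      rw [abs_of_nonneg (by positivity : (0:ℝ) ≤ (Real.sqrt 2)⁻¹)]
      have hsq2 : ((Real.sqrt 2)⁻¹)^2 = 2⁻¹ := by
        rw [inv_pow, Real.sq_sqrt (by norm_num : (0:ℝ) ≤ 2)]
      rw [hsq2]
      norm_num
    · have hprod : ∀ x : Fin n → ZMod 2,
          ∏ i, ((((Real.sqrt 2)⁻¹ : ℝ) : ℂ) * chi ℂ (x i * w i))
          = (((Real.sqrt (2^n))⁻¹ : ℝ) : ℂ) * chi ℂ (∑ i, x i * w i) := by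
        intro x
        rw [Finset.prod_mul_distrib, Finset.prod_const, Finset.card_univ, Fintype.card_fin,
          chi_sum Finset.univ (fun i => x i * w i)]
        congr 1
        rw [sqrt_two_pow]
        push_cast
        rw [inv_pow]
      have hsumeq : ∑ x : Fin n → ZMod 2,
            (s x : ℂ) * (starRingEnd ℂ) (∏ i, (((Real.sqrt 2)⁻¹ : ℝ) : ℂ) * chi ℂ (x i * w i))
          = ((((Real.sqrt (2 ^ n))⁻¹ *
              ∑ x : Fin n → ZMod 2, (-1 : ℝ) ^ ((∑ i, x i * w i).val) * s x) : ℝ) : ℂ) := by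
        have hterm : ∀ x : Fin n → ZMod 2,
            (s x : ℂ) * (starRingEnd ℂ)
              (∏ i, (((Real.sqrt 2)⁻¹ : ℝ) : ℂ) * chi ℂ (x i * w i))
            = (((Real.sqrt (2^n))⁻¹ : ℝ) : ℂ) *
                (((-1:ℝ)^((∑ i, x i * w i).val) * s x : ℝ) : ℂ) := by
          intro x
          rw [hprod x, map_mul, Complex.conj_ofReal, conj_chi, ← chi_real_eq,
            ← chi_complex_ofReal]
          push_cast
          ring
        rw [Finset.sum_congr rfl (fun x _ => hterm x), ← Finset.mul_sum]
        push_cast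
        ring
      rw [hsumeq, Complex.norm_real, Real.norm_eq_abs, sq_abs]
  subst hPAR
  constructor
  · rw [← hNdef]
    refine mul_le_mul_of_nonneg_left ?_ (by positivity)
    exact ciSup_le fun w => le_csSup hbdd (hmem w)
  · have h1 : sSup { r : ℝ |
        ∃ l : Fin n → (ZMod 2 → ℂ),
          (∀ i, ‖l i 0‖ ^ 2 + ‖l i 1‖ ^ 2 = 1) ∧
          r = ‖∑ x : Fin n → ZMod 2,
                (s x : ℂ) * (starRingEnd ℂ) (∏ i, l i (x i))‖ ^ 2 }
        ≤ ((2:ℝ)^n)⁻¹ * ((K0:ℝ) * 2^Sᶜ.card) := Real.sSup_le hub (by positivity)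
    have h2 : (2:ℝ) ^ ((n : ℝ) - (N : ℝ) / 2) = (K0:ℝ) * 2^Sᶜ.card := by
      rw [Real.rpow_sub (by norm_num : (0:ℝ) < 2), Real.rpow_natCast, ← hI]
      rw [h2n', ← hcount]
      field_simp
    calc (2:ℝ)^n * sSup _ ≤ (2:ℝ)^n * (((2:ℝ)^n)⁻¹ * ((K0:ℝ) * 2^Sᶜ.card)) :=
          mul_le_mul_of_nonneg_left h1 (by positivity)
      _ = (K0:ℝ) * 2^Sᶜ.card := by field_simp
      _ = (2:ℝ) ^ ((n : ℝ) - (N : ℝ) / 2) := h2.symm
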